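/- arXiv:1909.02990 — 2 statements merged into one kernel-verified Lean document; each statement's English description precedes it below -/
import Mathlib

section
/- Let S ⊆ ℝ² be a nonempty open connected set with Lebesgue measure |S| = 1. Suppose there exist L ≥ 0 and a map γ : [0,1] → ℝ² that is continuous, has total variation eVariationOn γ [0,1] ≤ L, and whose image γ([0,1]) contains the topological frontier of S. Then there exists a point x ∈ ℝ² such that the open disc of radius (2(4⌈L⌉+1))⁻¹ centered at x is contained in S; in particular, S contains a disc whose radius is bounded below by a positive constant depending only on L. -/
open MeasureTheory Set

private lemma coord_abs_le_dist (x y : EuclideanSpace ℝ (Fin 2)) (i : Fin 2) :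
    |x i - y i| ≤ dist x y := by
  rw [EuclideanSpace.dist_eq, ← Real.sqrt_sq_eq_abs]
  apply Real.sqrt_le_sqrt
  have h : (x i - y i) ^ 2 = dist (x i) (y i) ^ 2 := by
    rw [Real.dist_eq, sq_abs]
  rw [h]
  exact Finset.single_le_sum (f := fun j => dist (x j) (y j) ^ 2)
    (fun j _ => sq_nonneg _) (Finset.mem_univ i)

private lemma preconn_frontier {S Q : Set (EuclideanSpace ℝ (Fin 2))}
    (hS : IsOpen S) (hQ : IsPreconnected Q) (h1 : (Q ∩ S).Nonempty)
    (h2 : (Q \ S).Nonempty) : (Q ∩ frontier S).Nonempty := by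
  by_contra hemp
  rw [not_nonempty_iff_eq_empty] at hemp
  have hni : ∀ x ∈ Q, x ∉ frontier S := fun x hx hfx =>
    (eq_empty_iff_forall_notMem.mp hemp x) ⟨hx, hfx⟩
  have hcover : Q ⊆ S ∪ (closure S)ᶜ := by
    intro x hx
    by_cases hc : x ∈ closure S
    · left
      by_contra hxS
      exact hni x hx ⟨hc, by rwa [hS.interior_eq]⟩
    · right; exact hc
  have h2' : (Q ∩ (closure S)ᶜ).Nonempty := by
    obtain ⟨y, hyQ, hyS⟩ := h2
    refine ⟨y, hyQ, fun hc => ?_⟩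
    exact hni y hyQ ⟨hc, by rwa [hS.interior_eq]⟩
  obtain ⟨z, hzQ, hzS, hzc⟩ :=
    hQ S (closure S)ᶜ hS isClosed_closure.isOpen_compl hcover h1 h2'
  exact hzc (subset_closure hzS)

private lemma volume_box (a b : Fin 2 → ℝ) :
    volume {x : EuclideanSpace ℝ (Fin 2) | ∀ i, a i ≤ x i ∧ x i < b i} =
      ENNReal.ofReal (b 0 - a 0) * ENNReal.ofReal (b 1 - a 1) := by
  have hset : {x : EuclideanSpace ℝ (Fin 2) | ∀ i, a i ≤ x i ∧ x i < b i} =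
      (MeasurableEquiv.toLp 2 (Fin 2 → ℝ)).symm ⁻¹'
        (Set.univ.pi fun i => Ico (a i) (b i)) := by
    ext x
    simp only [mem_setOf_eq, mem_preimage, mem_pi, mem_univ, forall_true_left, mem_Ico]
    rfl
  rw [hset,
    (EuclideanSpace.volume_preserving_symm_measurableEquiv_toLp (Fin 2)).measure_preimage
      ((MeasurableSet.univ_pi fun i => measurableSet_Ico).nullMeasurableSet),
    volume_pi_pi]
  simp [Fin.prod_univ_two, Real.volume_Ico]

private def gridSq (s : ℝ) (z : Fin 2 → ℤ) : Set (EuclideanSpace ℝ (Fin 2)) :=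
  {x | ∀ i, (z i : ℝ) * s ≤ x i ∧ x i < ((z i : ℝ) + 1) * s}

private lemma gridSq_mem {s : ℝ} (hs : 0 < s) (z : Fin 2 → ℤ)
    (x : EuclideanSpace ℝ (Fin 2)) : x ∈ gridSq s z ↔ ∀ i, ⌊x i / s⌋ = z i := by
  unfold gridSq
  rw [mem_setOf_eq]
  apply forall_congr'
  intro i
  rw [Int.floor_eq_iff, le_div_iff₀ hs, div_lt_iff₀ hs]

private lemma gridSq_volume {s : ℝ} (z : Fin 2 → ℤ) :
    volume (gridSq s z) = ENNReal.ofReal s * ENNReal.ofReal s := by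
  have harith : ∀ a : ℝ, (a + 1) * s - a * s = s := fun a => by ring
  have h := volume_box (fun i => (z i : ℝ) * s) (fun i => ((z i : ℝ) + 1) * s)
  simp only [] at h
  unfold gridSq
  rw [h, harith, harith]

private lemma gridSq_convex (s : ℝ) (z : Fin 2 → ℤ) : Convex ℝ (gridSq s z) := by
  intro a ha b hb p q hp hq hpq
  intro i
  have happ : (p • a + q • b) i = p * a i + q * b i := rfl
  obtain ⟨ha1, ha2⟩ := ha i
  obtain ⟨hb1, hb2⟩ := hb i
  rw [happ]
  have hsum1 : (↑(z i) : ℝ) * s = p * ((↑(z i) : ℝ) * s) + q * ((↑(z i) : ℝ) * s) := by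
    rw [← add_mul, hpq, one_mul]
  have hsum2 : ((↑(z i) : ℝ) + 1) * s =
      p * (((↑(z i) : ℝ) + 1) * s) + q * (((↑(z i) : ℝ) + 1) * s) := by
    rw [← add_mul, hpq, one_mul]
  constructor
  · linarith [mul_le_mul_of_nonneg_left ha1 hp, mul_le_mul_of_nonneg_left hb1 hq]
  · rcases lt_or_eq_of_le hp with hp0 | hp0
    · linarith [mul_lt_mul_of_pos_left ha2 hp0, mul_le_mul_of_nonneg_left hb2.le hq]
    · have hq1 : q = 1 := by linarith
      rw [← hp0, hq1]
      simpa using hb2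

private lemma gridSq_ball {s : ℝ} (hs : 0 < s) (z : Fin 2 → ℤ) :
    Metric.ball (show EuclideanSpace ℝ (Fin 2) from WithLp.toLp 2 (fun i => ((z i : ℝ) + 2⁻¹) * s))
      (s / 2) ⊆ gridSq s z := by
  intro y hy
  rw [Metric.mem_ball] at hy
  intro i
  have h1 := coord_abs_le_dist y (WithLp.toLp 2 (fun i => ((z i : ℝ) + 2⁻¹) * s)) i
  have h2 : |y i - ((z i : ℝ) + 2⁻¹) * s| < s / 2 := lt_of_le_of_lt h1 hy
  have h3 := abs_lt.mp h2
  constructor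
  · nlinarith [h3.1, h3.2]
  · nlinarith [h3.1, h3.2]

/-- Lemma 4.4 (Lem:AreaPer): a nonempty open connected planar set of measure 1 whose
frontier is covered by a rectifiable curve of length at most `L` contains a disc of
radius `(2(4⌈L⌉+1))⁻¹`. -/
theorem area_perimeter_disc
    (S : Set (EuclideanSpace ℝ (Fin 2))) (hSne : S.Nonempty)
    (hSopen : IsOpen S) (hSconn : IsConnected S)
    (hvol : volume S = 1)
    (L : ℝ) (hL : 0 ≤ L)
    (γ : ℝ → EuclideanSpace ℝ (Fin 2))
    (hγcont : ContinuousOn γ (Set.Icc 0 1))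
    (hγvar : eVariationOn γ (Set.Icc 0 1) ≤ ENNReal.ofReal L)
    (hfr : frontier S ⊆ γ '' (Set.Icc 0 1)) :
    ∃ x : EuclideanSpace ℝ (Fin 2),
      Metric.ball x ((2 * (4 * (⌈L⌉ : ℝ) + 1))⁻¹) ⊆ S := by
  classical
  rcases le_or_gt L 0 with hL0 | hLpos
  · -- degenerate case: L = 0, frontier in a single point, contradiction
    exfalso
    have hL0' : L = 0 := le_antisymm hL0 hL
    have hvar0 : eVariationOn γ (Set.Icc 0 1) = 0 := by
      refine le_antisymm ?_ zero_le
      rw [hL0'] at hγvar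
      simpa using hγvar
    have himg : γ '' (Set.Icc (0:ℝ) 1) ⊆ {γ 0} := by
      rintro _ ⟨t, ht, rfl⟩
      have h0 : (0:ℝ) ∈ Set.Icc (0:ℝ) 1 := ⟨le_refl 0, zero_le_one⟩
      have hle := eVariationOn.edist_le γ ht h0
      rw [hvar0, le_zero_iff, edist_eq_zero] at hle
      simpa using hle
    set p := γ 0 with hp
    have hfrp : frontier S ⊆ {p} := hfr.trans himg
    have hvolp : volume ({p} : Set (EuclideanSpace ℝ (Fin 2))) = 0 := measure_singleton p
    have hSp : ¬ S ⊆ {p} := by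
      intro h
      have hm := measure_mono (μ := volume) h
      rw [hvol, hvolp] at hm
      exact (by norm_num : ¬ (1:ENNReal) ≤ 0) hm
    obtain ⟨q, hqS, hqp⟩ := not_subset.mp hSp
    have hclos : volume (closure S) ≤ 1 := by
      have hsub : closure S ⊆ S ∪ {p} := by
        rw [closure_eq_self_union_frontier]
        exact union_subset_union_right S hfrp
      calc volume (closure S) ≤ volume (S ∪ {p}) := measure_mono hsub
      _ ≤ volume S + volume {p} := measure_union_le _ _
      _ = 1 := by rw [hvol, hvolp, add_zero]
    have hU : (({p}ᶜ : Set (EuclideanSpace ℝ (Fin 2))) ∩ (closure S)ᶜ).Nonempty := by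
      by_contra h
      rw [not_nonempty_iff_eq_empty] at h
      have hsub : ∀ x : EuclideanSpace ℝ (Fin 2), x ∉ closure S → x = p := by
        intro x hx
        by_contra hxp
        exact (eq_empty_iff_forall_notMem.mp h x) ⟨hxp, hx⟩
      have hbox : {x : EuclideanSpace ℝ (Fin 2) | ∀ i, (0:ℝ) ≤ x i ∧ x i < 2}
          ⊆ closure S ∪ {p} := by
        intro x _
        by_cases hx : x ∈ closure S
        · exact Or.inl hx
        · exact Or.inr (hsub x hx)
      have h4 : volume {x : EuclideanSpace ℝ (Fin 2) | ∀ i, (0:ℝ) ≤ x i ∧ x i < 2}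
          = 4 := by
        rw [volume_box (fun _ => (0:ℝ)) (fun _ => (2:ℝ))]
        rw [← ENNReal.ofReal_mul (by norm_num)]
        norm_num
      have hle4 : (4:ENNReal) ≤ 1 := by
        calc (4:ENNReal) = volume {x : EuclideanSpace ℝ (Fin 2) | ∀ i, (0:ℝ) ≤ x i ∧ x i < 2} :=
          h4.symm
        _ ≤ volume (closure S ∪ {p}) := measure_mono hbox
        _ ≤ volume (closure S) + volume {p} := measure_union_le _ _
        _ ≤ 1 := by rw [hvolp, add_zero]; exact hclos
      norm_num at hle4
    have hrank : 1 < Module.rank ℝ (EuclideanSpace ℝ (Fin 2)) := by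
      rw [← Module.finrank_eq_rank, finrank_euclideanSpace_fin]
      exact_mod_cast one_lt_two
    have hpre : IsPreconnected ({p}ᶜ : Set (EuclideanSpace ℝ (Fin 2))) :=
      (isConnected_compl_singleton_of_one_lt_rank hrank p).isPreconnected
    have hcover : ({p}ᶜ : Set (EuclideanSpace ℝ (Fin 2))) ⊆ S ∪ (closure S)ᶜ := by
      intro x hxp
      by_cases hc : x ∈ closure S
      · left
        by_contra hxS
        exact hxp (hfrp ⟨hc, by rwa [hSopen.interior_eq]⟩)
      · right; exact hc
    obtain ⟨w, hw1, hwS, hwc⟩ := hpre S (closure S)ᶜ hSopen isClosed_closure.isOpen_compl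
      hcover ⟨q, hqp, hqS⟩ (by obtain ⟨u, hu1, hu2⟩ := hU; exact ⟨u, hu1, hu2⟩)
    exact hwc (subset_closure hwS)
  · -- main case
    have hceil0 : (0:ℤ) < ⌈L⌉ := Int.ceil_pos.mpr hLpos
    set c : ℝ := (⌈L⌉ : ℝ) with hc
    have hc1 : 1 ≤ c := by rw [hc]; exact_mod_cast hceil0
    have hLc : L ≤ c := Int.le_ceil L
    set n : ℕ := ⌈L⌉.toNat with hn
    have hcn : c = (n : ℝ) := by
      rw [hc, hn]
      norm_cast
      exact (Int.toNat_of_nonneg hceil0.le).symm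
    set s : ℝ := (4 * c + 1)⁻¹ with hs
    have hspos : 0 < s := inv_pos.mpr (by linarith)
    set I : Set ℝ := Set.Icc (0:ℝ) 1 with hI
    have hBV : BoundedVariationOn γ I := ne_top_of_le_ne_top ENNReal.ofReal_ne_top hγvar
    have hLBV := hBV.locallyBoundedVariationOn
    set φ : ℝ → ℝ := fun t => variationOnFromTo γ I 0 t with hφ
    have h0I : (0:ℝ) ∈ I := ⟨le_refl 0, zero_le_one⟩
    have hφ0 : ∀ t ∈ I, 0 ≤ φ t := fun t ht => variationOnFromTo.nonneg_of_le γ I ht.1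
    have hφL : ∀ t ∈ I, φ t ≤ L := by
      intro t ht
      rw [hφ]
      dsimp only
      rw [variationOnFromTo.eq_of_le γ I ht.1]
      exact ENNReal.toReal_le_of_le_ofReal hL
        (le_trans (eVariationOn.mono γ inter_subset_left) hγvar)
    have hdist : ∀ t ∈ I, ∀ t' ∈ I, dist (γ t) (γ t') ≤ |φ t - φ t'| := by
      intro t ht t' ht'
      rcases le_total t t' with htt' | htt'
      case _ =>
        have hadd := variationOnFromTo.add hLBV h0I ht ht'
        have hd : dist (γ t) (γ t') ≤ variationOnFromTo γ I t t' := by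
          rw [variationOnFromTo.eq_of_le γ I htt']
          exact BoundedVariationOn.dist_le (hBV.mono inter_subset_left)
            ⟨ht, le_rfl, htt'⟩ ⟨ht', htt', le_rfl⟩
        have : dist (γ t) (γ t') ≤ φ t' - φ t := by
          rw [hφ]; dsimp only; linarith [hd, hadd]
        calc dist (γ t) (γ t') ≤ φ t' - φ t := this
        _ ≤ |φ t - φ t'| := by rw [abs_sub_comm]; exact le_abs_self _
      case _ =>
        have hadd := variationOnFromTo.add hLBV h0I ht' ht
        have hd : dist (γ t') (γ t) ≤ variationOnFromTo γ I t' t := by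
          rw [variationOnFromTo.eq_of_le γ I htt']
          exact BoundedVariationOn.dist_le (hBV.mono inter_subset_left)
            ⟨ht', le_rfl, htt'⟩ ⟨ht, htt', le_rfl⟩
        have : dist (γ t) (γ t') ≤ φ t - φ t' := by
          rw [dist_comm, hφ]; dsimp only; linarith [hd, hadd]
        calc dist (γ t) (γ t') ≤ φ t - φ t' := this
        _ ≤ |φ t - φ t'| := le_abs_self _
    set C : ℕ → Set (EuclideanSpace ℝ (Fin 2)) :=
      fun j => γ '' {t ∈ I | (j:ℝ) * s ≤ φ t ∧ φ t ≤ ((j:ℝ)+1) * s} with hC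
    have hCdiam : ∀ j, ∀ w ∈ C j, ∀ w' ∈ C j, dist w w' ≤ s := by
      rintro j w hw w' hw'
      rw [hC] at hw hw'
      obtain ⟨t, ⟨ht, h1, h2⟩, rfl⟩ := hw
      obtain ⟨t', ⟨ht', h1', h2'⟩, rfl⟩ := hw'
      calc dist (γ t) (γ t') ≤ |φ t - φ t'| := hdist t ht t' ht'
      _ ≤ s := abs_sub_le_iff.mpr ⟨by linarith, by linarith⟩
    set m : ℕ → Fin 2 → ℝ := fun j i => sInf ((fun w => w i) '' C j) with hm
    set K : ℕ → Fin 2 → ℤ := fun j i => ⌊m j i / s⌋ with hK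
    have hKfloor : ∀ j, ∀ w ∈ C j, ∀ i, K j i ≤ ⌊w i / s⌋ ∧ ⌊w i / s⌋ ≤ K j i + 1 := by
      intro j w hw i
      have hlb : ∀ y ∈ (fun w : EuclideanSpace ℝ (Fin 2) => w i) '' C j, w i - s ≤ y := by
        rintro _ ⟨w', hw', rfl⟩
        have h1 := coord_abs_le_dist w w' i
        have h2 := hCdiam j w hw w' hw'
        have h3 := abs_le.mp (h1.trans h2)
        linarith [h3.1, h3.2]
      have hmem : w i ∈ (fun w : EuclideanSpace ℝ (Fin 2) => w i) '' C j := ⟨w, hw, rfl⟩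
      have hmw : m j i ≤ w i := csInf_le ⟨w i - s, hlb⟩ hmem
      have hwm : w i - s ≤ m j i := le_csInf ⟨w i, hmem⟩ hlb
      constructor
      · exact Int.floor_le_floor (by gcongr)
      · have hdd : w i / s ≤ m j i / s + 1 := by
          rw [div_add' _ _ _ hspos.ne']
          exact (div_le_div_iff_of_pos_right hspos).mpr (by linarith)
        calc ⌊w i / s⌋ ≤ ⌊m j i / s + 1⌋ := Int.floor_le_floor hdd
        _ = K j i + 1 := by rw [Int.floor_add_one]
    have hfrC : ∀ w ∈ frontier S, ∃ j ∈ Finset.range (n * (4*n+1) + 1), w ∈ C j := by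
      intro w hwf
      obtain ⟨t, ht, rfl⟩ := hfr hwf
      set j : ℕ := ⌊φ t / s⌋₊ with hj
      have hφt0 : 0 ≤ φ t := hφ0 t ht
      have hj1 : (j:ℝ) * s ≤ φ t := by
        have hfl := Nat.floor_le (div_nonneg hφt0 hspos.le)
        calc (j:ℝ) * s ≤ (φ t / s) * s := mul_le_mul_of_nonneg_right hfl hspos.le
        _ = φ t := div_mul_cancel₀ _ hspos.ne'
      have hj2 : φ t ≤ ((j:ℝ)+1) * s := by
        have hfl := (Nat.lt_floor_add_one (φ t / s)).le
        calc φ t = (φ t / s) * s := (div_mul_cancel₀ _ hspos.ne').symm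
        _ ≤ ((j:ℝ)+1) * s := mul_le_mul_of_nonneg_right hfl hspos.le
      refine ⟨j, ?_, ⟨t, ⟨ht, hj1, hj2⟩, rfl⟩⟩
      rw [Finset.mem_range, Nat.lt_succ_iff, hj]
      have h1 : φ t / s ≤ ((n * (4*n+1) : ℕ) : ℝ) := by
        have hφtc : φ t ≤ c := (hφL t ht).trans hLc
        have hcast : ((n * (4*n+1) : ℕ) : ℝ) = c * (4*c+1) := by
          push_cast
          rw [← hcn]
        have hcs : c * (4*c+1) * s = c := by
          rw [hs]
          field_simp
        rw [hcast, div_le_iff₀ hspos]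
        linarith [hφtc, hcs]
      calc ⌊φ t / s⌋₊ ≤ ⌊((n * (4*n+1) : ℕ) : ℝ)⌋₊ := Nat.floor_le_floor h1
      _ = n * (4*n+1) := Nat.floor_natCast _
    -- the squares covering the frontier
    set B : Finset (Fin 2 → ℤ) := (Finset.range (n * (4*n+1) + 1)).biUnion
      (fun j => {![K j 0, K j 1], ![K j 0 + 1, K j 1], ![K j 0, K j 1 + 1],
        ![K j 0 + 1, K j 1 + 1]}) with hB
    by_contra hcon
    have hnosub : ∀ z : Fin 2 → ℤ, ∃ y ∈ gridSq s z, y ∉ S := by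
      intro z
      by_contra h
      push_neg at h
      apply hcon
      refine ⟨(WithLp.toLp 2 (fun i => ((z i : ℝ) + 2⁻¹) * s) : EuclideanSpace ℝ (Fin 2)), ?_⟩
      have hr : (2 * (4 * (⌈L⌉ : ℝ) + 1))⁻¹ = s / 2 := by
        rw [hs, ← hc, mul_inv]
        ring
      rw [hr]
      exact fun y hy => h y (gridSq_ball hspos z hy)
    have hcoverS : S ⊆ ⋃ z ∈ B, gridSq s z := by
      intro x hx
      have hxQ : x ∈ gridSq s (fun i => ⌊x i / s⌋) :=
        (gridSq_mem hspos _ x).mpr (fun i => rfl)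
      obtain ⟨y, hyQ, hyS⟩ := hnosub (fun i => ⌊x i / s⌋)
      obtain ⟨w, hwQ, hwf⟩ := preconn_frontier hSopen
        ((gridSq_convex s _).isPreconnected) ⟨x, hxQ, hx⟩ ⟨y, hyQ, hyS⟩
      obtain ⟨j, hjmem, hwC⟩ := hfrC w hwf
      have hwz : ∀ i, ⌊w i / s⌋ = (fun i => ⌊x i / s⌋) i := (gridSq_mem hspos _ w).mp hwQ
      have hKb := hKfloor j w hwC
      rw [mem_iUnion₂]
      refine ⟨(fun i => ⌊x i / s⌋), ?_, hxQ⟩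
      rw [hB, Finset.mem_biUnion]
      refine ⟨j, hjmem, ?_⟩
      have h0 := hKb 0
      have h1 := hKb 1
      rw [hwz 0] at h0
      rw [hwz 1] at h1
      simp only at h0 h1
      have hz0 : ⌊x 0 / s⌋ = K j 0 ∨ ⌊x 0 / s⌋ = K j 0 + 1 := by omega
      have hz1 : ⌊x 1 / s⌋ = K j 1 ∨ ⌊x 1 / s⌋ = K j 1 + 1 := by omega
      have hzeq : ∀ (a b : ℤ), ⌊x 0 / s⌋ = a → ⌊x 1 / s⌋ = b →
          (fun i : Fin 2 => ⌊x i / s⌋) = ![a, b] := by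
        intro a b h0' h1'
        funext i
        fin_cases i <;> simp [h0', h1']
      rcases hz0 with h|h <;> rcases hz1 with h'|h' <;>
        simp [hzeq _ _ h h']
    have hcard : B.card ≤ (n * (4*n+1) + 1) * 4 := by
      rw [hB]
      refine (Finset.card_biUnion_le).trans ?_
      refine le_trans (Finset.sum_le_card_nsmul _ _ 4 ?_) ?_
      · intro j _
        refine (Finset.card_insert_le _ _).trans ?_
        refine Nat.succ_le_succ ?_
        refine (Finset.card_insert_le _ _).trans ?_
        refine Nat.succ_le_succ ?_
        refine (Finset.card_insert_le _ _).trans ?_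
        simp
      · simp [Finset.card_range, smul_eq_mul]
    have hvols : (1:ENNReal) ≤ ENNReal.ofReal ((((n * (4*n+1) + 1) * 4 : ℕ) : ℝ) * (s * s)) := by
      calc (1:ENNReal) = volume S := hvol.symm
      _ ≤ volume (⋃ z ∈ B, gridSq s z) := measure_mono hcoverS
      _ ≤ ∑ z ∈ B, volume (gridSq s z) := measure_biUnion_finset_le B _
      _ = B.card • (ENNReal.ofReal s * ENNReal.ofReal s) := by
          rw [Finset.sum_congr rfl (fun z _ => gridSq_volume z), Finset.sum_const]
      _ = (B.card : ENNReal) * (ENNReal.ofReal s * ENNReal.ofReal s) := by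
          rw [nsmul_eq_mul]
      _ ≤ (((n * (4*n+1) + 1) * 4 : ℕ) : ENNReal) *
          (ENNReal.ofReal s * ENNReal.ofReal s) := by
          have hcard' : (B.card : ENNReal) ≤ (((n * (4*n+1) + 1) * 4 : ℕ) : ENNReal) :=
            Nat.cast_le.mpr hcard
          exact mul_le_mul_left hcard' _
      _ = ENNReal.ofReal ((((n * (4*n+1) + 1) * 4 : ℕ) : ℝ) * (s * s)) := by
          rw [← ENNReal.ofReal_mul hspos.le, ← ENNReal.ofReal_natCast,
            ← ENNReal.ofReal_mul (by positivity)]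
    have h1r : (1:ℝ) ≤ ((((n * (4*n+1) + 1) * 4 : ℕ)) : ℝ) * (s * s) :=
      ENNReal.one_le_ofReal.mp hvols
    have hcast2 : ((((n * (4*n+1) + 1) * 4 : ℕ)) : ℝ) = (c * (4*c+1) + 1) * 4 := by
      push_cast
      rw [← hcn]
    rw [hcast2] at h1r
    have hssum : s * (4*c+1) = 1 := by
      rw [hs]
      exact inv_mul_cancel₀ (by linarith)
    have h2 : (4*c+1) * (4*c+1) ≤ (c * (4*c+1) + 1) * 4 := by
      calc (4*c+1) * (4*c+1) = ((4*c+1) * (4*c+1)) * 1 := by ring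
      _ ≤ ((4*c+1) * (4*c+1)) * ((c * (4*c+1) + 1) * 4 * (s * s)) := by
          apply mul_le_mul_of_nonneg_left _ (by nlinarith)
          linarith [h1r]
      _ = ((c * (4*c+1) + 1) * 4) * ((s * (4*c+1)) * (s * (4*c+1))) := by ring
      _ = (c * (4*c+1) + 1) * 4 := by rw [hssum]; ring
    nlinarith [hc1, h2]
end

section
/- Let L > 0, let N be a positive integer, and let γ : [0,1] → ℝ² be continuous with total variation eVariationOn γ [0,1] ≤ L. For (i,j) ∈ ℤ² let Q^N_{i,j} := [i/N, (i+1)/N) × [j/N, (j+1)/N) ⊆ ℝ² be the half-open grid square of side 1/N. Then the image γ([0,1]) intersects at most 4·N·⌈L⌉ of the squares Q^N_{i,j}; that is, the set {(i,j) ∈ ℤ² : γ([0,1]) ∩ Q^N_{i,j} ≠ ∅} has at most 4N⌈L⌉ elements. -/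
open MeasureTheory Set

/-- The half-open grid square of side `1/N` indexed by `(i,j) ∈ ℤ²`. -/
def gridSquare (N : ℕ) (p : ℤ × ℤ) : Set (EuclideanSpace ℝ (Fin 2)) :=
  {x | x 0 ∈ Set.Ico ((p.1 : ℝ) / N) (((p.1 : ℝ) + 1) / N) ∧
       x 1 ∈ Set.Ico ((p.2 : ℝ) / N) (((p.2 : ℝ) + 1) / N)}

lemma evar_small_right {E : Type*} [PseudoEMetricSpace E] (f : ℝ → E) {a b : ℝ} (hab : a < b)
    (hcont : ContinuousWithinAt f (Set.Icc a b) a)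
    (hfin : eVariationOn f (Set.Icc a b) ≠ ⊤) {ε : ℝ} (hε : 0 < ε) :
    ∃ s, s ∈ Set.Ioc a b ∧ eVariationOn f (Set.Icc a s) ≤ ENNReal.ofReal ε := by
  by_cases hV : eVariationOn f (Set.Icc a b) ≤ ENNReal.ofReal ε
  · exact ⟨b, ⟨hab, le_rfl⟩, (eVariationOn.mono f (Icc_subset_Icc le_rfl le_rfl)).trans hV⟩
  set V := eVariationOn f (Set.Icc a b) with hVdef
  have hε2 : (0:ℝ) < ε / 2 := by linarith
  have hVpos : V ≠ 0 := by
    intro h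
    exact hV (h ▸ zero_le)
  have hsub : V - ENNReal.ofReal (ε / 2) < V :=
    ENNReal.sub_lt_self hfin hVpos (ENNReal.ofReal_pos.mpr hε2).ne'
  rw [hVdef, eVariationOn] at hsub
  obtain ⟨⟨n, u, hu, us⟩, hsum⟩ := lt_iSup_iff.mp hsub
  simp only at hsum
  have hsum' : V - ENNReal.ofReal (ε / 2)
      < ∑ i ∈ Finset.range n, edist (f (u (i + 1))) (f (u i)) := hsum
  clear hsum hsub
  -- get continuity data
  obtain ⟨δ, hδ, hδball⟩ := EMetric.tendsto_nhdsWithin_nhds.mp hcont (ENNReal.ofReal (ε/2))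
    (ENNReal.ofReal_pos.mpr hε2)
  set d : ℝ := if δ = ⊤ then 1 else δ.toReal / 2 with hd
  have hdpos : 0 < d := by
    rw [hd]; split
    · norm_num
    · have := ENNReal.toReal_pos hδ.ne' (by assumption)
      linarith
  have hdlt : ENNReal.ofReal d < δ := by
    rw [hd]; split
    · simp_all
    · calc ENNReal.ofReal (δ.toReal / 2) < ENNReal.ofReal δ.toReal := by
            apply ENNReal.ofReal_lt_ofReal_iff_of_nonneg (by positivity) |>.mpr
            have := ENNReal.toReal_pos hδ.ne' (by assumption)
            linarith
        _ = δ := ENNReal.ofReal_toReal (by assumption)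
  by_cases hex : ∃ i, i ≤ n ∧ a < u i
  · -- main case
    set j := Nat.find hex with hjdef
    obtain ⟨hjn, hja⟩ : j ≤ n ∧ a < u j := Nat.find_spec hex
    have hprefix : ∀ i < j, u i = a := by
      intro i hij
      have h1 : ¬(i ≤ n ∧ a < u i) := Nat.find_min hex hij
      push_neg at h1
      exact le_antisymm (h1 (le_trans hij.le hjn)) (us i).1
    set s : ℝ := min (u j) (a + d) with hs
    have has : a < s := lt_min hja (by linarith)
    have hsb : s ≤ b := le_trans (min_le_left _ _) (us j).2
    have hsuj : s ≤ u j := min_le_left _ _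
    have hfs : edist (f s) (f a) < ENNReal.ofReal (ε/2) := by
      apply hδball ⟨has.le, hsb⟩
      have h2 : edist s a = ENNReal.ofReal (s - a) := by
        rw [edist_dist, Real.dist_eq, abs_of_nonneg (by linarith)]
      rw [h2]
      refine lt_of_le_of_lt (ENNReal.ofReal_le_ofReal ?_) hdlt
      have := min_le_right (u j) (a + d)
      simp only [hs]
      linarith
    set z : ℕ → ℝ := fun i => max (u i) s with hz
    have hzmono : Monotone z := fun i k hik => max_le_max (hu hik) le_rfl
    have hzmem : ∀ i, z i ∈ Set.Icc s b := fun i => ⟨le_max_right _ _, max_le (us i).2 hsb⟩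
    have hterm : ∀ i ∈ Finset.range n,
        edist (f (u (i+1))) (f (u i)) ≤ edist (f (z (i+1))) (f (z i))
          + (if i + 1 = j then edist (f s) (f a) else 0) := by
      intro i _
      rcases lt_trichotomy (i+1) j with h | h | h
      · have h1 : u i = a := hprefix i (by omega)
        have h2 : u (i+1) = a := hprefix _ h
        simp [h1, h2, if_neg (Nat.ne_of_lt h)]
      · have h1 : u i = a := hprefix i (by omega)
        have hzi : z i = s := by
          rw [hz]; simp only
          rw [h1, max_eq_right has.le]
        have hzi1 : z (i+1) = u j := by
          rw [hz]; simp only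
          rw [h, max_eq_left hsuj]
        rw [if_pos h, h1, hzi, hzi1, h]
        exact edist_triangle _ _ _
      · have hji : j ≤ i := by omega
        have hzi : z i = u i := max_eq_left (le_trans hsuj (hu hji))
        have hzi1 : z (i+1) = u (i+1) := max_eq_left (le_trans hsuj (hu (by omega)))
        simp [hzi, hzi1, if_neg (by omega : ¬ i + 1 = j)]
    have hsum2 : (∑ i ∈ Finset.range n, edist (f (u (i+1))) (f (u i)))
        ≤ (∑ i ∈ Finset.range n, edist (f (z (i+1))) (f (z i))) + edist (f s) (f a) := by
      calc (∑ i ∈ Finset.range n, edist (f (u (i+1))) (f (u i)))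
          ≤ ∑ i ∈ Finset.range n, (edist (f (z (i+1))) (f (z i))
              + (if i + 1 = j then edist (f s) (f a) else 0)) := Finset.sum_le_sum hterm
        _ = (∑ i ∈ Finset.range n, edist (f (z (i+1))) (f (z i)))
              + ∑ i ∈ Finset.range n, (if i + 1 = j then edist (f s) (f a) else 0) :=
            Finset.sum_add_distrib
        _ ≤ _ := by
            gcongr
            rcases j with _ | j'
            · simp
            · have hcongr : ∀ i ∈ Finset.range n, (if i + 1 = j' + 1 then edist (f s) (f a) else 0)
                  = if i = j' then edist (f s) (f a) else 0 := by
                intro i _; simp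
              rw [Finset.sum_congr rfl hcongr, Finset.sum_ite_eq' (Finset.range n) j']
              split <;> simp
    have hzsum : (∑ i ∈ Finset.range n, edist (f (z (i+1))) (f (z i)))
        ≤ eVariationOn f (Set.Icc s b) := eVariationOn.sum_le (f := f) (n := n) hzmono hzmem
    have hVfin' : eVariationOn f (Set.Icc s b) ≠ ⊤ :=
      ne_top_of_le_ne_top hfin (eVariationOn.mono f (Icc_subset_Icc has.le le_rfl))
    have hVle : V ≤ eVariationOn f (Set.Icc s b) + ENNReal.ofReal ε := by
      have hcle : ENNReal.ofReal (ε/2) ≤ V :=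
        le_trans (ENNReal.ofReal_le_ofReal (by linarith)) (not_le.mp hV).le
      have h1 : V < (∑ i ∈ Finset.range n, edist (f (u (i+1))) (f (u i)))
          + ENNReal.ofReal (ε/2) :=
        (ENNReal.sub_lt_iff_lt_right (by simp) hcle).mp hsum'
      have hsum3 : (∑ i ∈ Finset.range n, edist (f (u (i+1))) (f (u i)))
          ≤ eVariationOn f (Set.Icc s b) + edist (f s) (f a) :=
        hsum2.trans (add_le_add_left hzsum _)
      calc V ≤ (∑ i ∈ Finset.range n, edist (f (u (i+1))) (f (u i)))
              + ENNReal.ofReal (ε/2) := h1.le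
        _ ≤ eVariationOn f (Set.Icc s b) + edist (f s) (f a) + ENNReal.ofReal (ε/2) :=
            add_le_add_left hsum3 _
        _ ≤ eVariationOn f (Set.Icc s b) + ENNReal.ofReal (ε/2) + ENNReal.ofReal (ε/2) :=
            add_le_add_left (add_le_add_right hfs.le _) _
        _ = eVariationOn f (Set.Icc s b) + ENNReal.ofReal ε := by
            rw [add_assoc, ← ENNReal.ofReal_add (by linarith) (by linarith)]
            norm_num
    have hsplit := eVariationOn.Icc_add_Icc f (s := (univ : Set ℝ)) has.le hsb (mem_univ s)
    simp only [Set.univ_inter] at hsplit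
    refine ⟨s, ⟨has, hsb⟩, ?_⟩
    have h2 : eVariationOn f (Set.Icc a s) + eVariationOn f (Set.Icc s b)
        ≤ ENNReal.ofReal ε + eVariationOn f (Set.Icc s b) := by
      rw [hsplit]
      rw [add_comm]
      exact hVle
    exact (ENNReal.add_le_add_iff_right hVfin').mp h2
  · push_neg at hex
    exfalso
    have hzero : (∑ i ∈ Finset.range n, edist (f (u (i+1))) (f (u i))) = 0 := by
      apply Finset.sum_eq_zero
      intro i hi
      rw [Finset.mem_range] at hi
      have h1 : u i = a := le_antisymm (hex i (by omega)) (us i).1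
      have h2 : u (i+1) = a := le_antisymm (hex (i+1) (by omega)) (us (i+1)).1
      simp [h1, h2]
    rw [hzero] at hsum'
    simp at hsum'

lemma evar_small_left {E : Type*} [PseudoEMetricSpace E] (f : ℝ → E) {a b : ℝ} (hab : a < b)
    (hcont : ContinuousWithinAt f (Set.Icc a b) b)
    (hfin : eVariationOn f (Set.Icc a b) ≠ ⊤) {ε : ℝ} (hε : 0 < ε) :
    ∃ s, s ∈ Set.Ico a b ∧ eVariationOn f (Set.Icc s b) ≤ ENNReal.ofReal ε := by
  have hanti : ∀ (t : Set ℝ), AntitoneOn (Neg.neg : ℝ → ℝ) t :=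
    fun t x _ y _ h => neg_le_neg h
  have hcomp : ∀ c e : ℝ, eVariationOn (f ∘ Neg.neg) (Set.Icc c e)
      = eVariationOn f (Set.Icc (-e) (-c)) := by
    intro c e
    rw [eVariationOn.comp_eq_of_antitoneOn f Neg.neg (hanti _)]
    congr 1
    ext x
    simp only [Set.mem_image, Set.mem_Icc]
    constructor
    · rintro ⟨y, hy, rfl⟩; exact ⟨by linarith [hy.2], by linarith [hy.1]⟩
    · intro hx; exact ⟨-x, ⟨by linarith [hx.2], by linarith [hx.1]⟩, by ring⟩
  have hcont' : ContinuousWithinAt (f ∘ Neg.neg) (Set.Icc (-b) (-a)) (-b) := by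
    apply ContinuousWithinAt.comp (by simpa using hcont)
      (continuous_neg.continuousWithinAt)
    intro x hx
    simp only [Set.mem_Icc] at hx ⊢
    constructor <;> linarith [hx.1, hx.2]
  have hfin' : eVariationOn (f ∘ Neg.neg) (Set.Icc (-b) (-a)) ≠ ⊤ := by
    rw [hcomp]; simpa using hfin
  obtain ⟨s, hs, hVs⟩ := evar_small_right (f ∘ Neg.neg) (neg_lt_neg hab) hcont' hfin' hε
  refine ⟨-s, ⟨by linarith [hs.2], by linarith [hs.1]⟩, ?_⟩
  rw [hcomp (-b) s] at hVs
  simpa using hVs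

lemma coord_dist_le (x y : EuclideanSpace ℝ (Fin 2)) (i : Fin 2) :
    dist (x i) (y i) ≤ dist x y := by
  rw [EuclideanSpace.dist_eq]
  rw [show dist (x i) (y i) = Real.sqrt (dist (x i) (y i) ^ 2) from (Real.sqrt_sq dist_nonneg).symm]
  apply Real.sqrt_le_sqrt
  exact Finset.single_le_sum (f := fun j => dist (x j) (y j) ^ 2)
    (fun j _ => sq_nonneg _) (Finset.mem_univ i)


lemma encard_grid_le_four (N : ℕ) (hN : 0 < N) (A : Set (EuclideanSpace ℝ (Fin 2)))
    (hA : ∀ x ∈ A, ∀ y ∈ A, dist x y ≤ 1 / N) :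
    {p : ℤ × ℤ | (A ∩ gridSquare N p).Nonempty}.encard ≤ 4 := by
  rcases A.eq_empty_or_nonempty with rfl | ⟨a, ha⟩
  · simp
  have hNR : (0:ℝ) < N := Nat.cast_pos.mpr hN
  have key : ∀ i : Fin 2, ∃ m : ℤ, ∀ x ∈ A, ⌊(N:ℝ) * x i⌋ = m ∨ ⌊(N:ℝ) * x i⌋ = m + 1 := by
    intro i
    set S : Set ℝ := (fun x : EuclideanSpace ℝ (Fin 2) => x i) '' A with hS
    have hSne : S.Nonempty := ⟨a i, ⟨a, ha, rfl⟩⟩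
    have hcoord : ∀ x ∈ A, ∀ y ∈ A, x i - 1/N ≤ y i := by
      intro x hx y hy
      have h1 : dist (x i) (y i) ≤ 1/N := le_trans (coord_dist_le x y i) (hA x hx y hy)
      rw [Real.dist_eq] at h1
      have h2 := abs_le.mp h1
      linarith [h2.1]
    have hbdd : BddBelow S := ⟨a i - 1/N, by rintro _ ⟨y, hy, rfl⟩; exact hcoord a ha y hy⟩
    set m := sInf S with hm
    refine ⟨⌊(N:ℝ) * m⌋, fun x hx => ?_⟩
    have h1 : m ≤ x i := csInf_le hbdd ⟨x, hx, rfl⟩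
    have h2 : x i ≤ m + 1/N := by
      have h3 : x i - 1/N ≤ m :=
        le_csInf hSne (by rintro _ ⟨y, hy, rfl⟩; exact hcoord x hx y hy)
      linarith
    have hlow : ⌊(N:ℝ) * m⌋ ≤ ⌊(N:ℝ) * x i⌋ := Int.floor_le_floor (by nlinarith)
    have hhigh : ⌊(N:ℝ) * x i⌋ ≤ ⌊(N:ℝ) * m⌋ + 1 := by
      have hN1 : (N:ℝ) * (1/N) = 1 := by field_simp
      have hNx : (N:ℝ) * x i ≤ (N:ℝ) * m + 1 := by nlinarith
      calc ⌊(N:ℝ) * x i⌋ ≤ ⌊(N:ℝ) * m + 1⌋ := Int.floor_le_floor hNx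
        _ = ⌊(N:ℝ) * m⌋ + 1 := by
            rw [show ((N:ℝ) * m + 1) = (N:ℝ) * m + (1:ℤ) by norm_num, Int.floor_add_intCast]
    omega
  obtain ⟨m0, hm0⟩ := key 0
  obtain ⟨m1, hm1⟩ := key 1
  have hfloor : ∀ (q : ℤ) (r : ℝ), r ∈ Set.Ico ((q:ℝ)/N) (((q:ℝ)+1)/N) → ⌊(N:ℝ) * r⌋ = q := by
    intro q r hr
    rw [Int.floor_eq_iff]
    constructor
    · have h1 := (div_le_iff₀ hNR).mp hr.1
      linarith
    · have h2 := (lt_div_iff₀ hNR).mp hr.2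
      linarith
  have hsub : {p : ℤ × ℤ | (A ∩ gridSquare N p).Nonempty} ⊆
      ({(m0,m1), (m0,m1+1), (m0+1,m1), (m0+1,m1+1)} : Set (ℤ × ℤ)) := by
    rintro ⟨p1, p2⟩ ⟨x, hxA, hx0, hx1⟩
    have e0 : ⌊(N:ℝ) * x 0⌋ = p1 := hfloor p1 (x 0) hx0
    have e1 : ⌊(N:ℝ) * x 1⌋ = p2 := hfloor p2 (x 1) hx1
    have c0 := hm0 x hxA
    have c1 := hm1 x hxA
    simp only [Set.mem_insert_iff, Set.mem_singleton_iff, Prod.mk.injEq]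
    rw [e0] at c0; rw [e1] at c1
    tauto
  refine le_trans (Set.encard_mono hsub) ?_
  refine le_trans (Set.encard_insert_le _ _) ?_
  refine le_trans (add_le_add_left (Set.encard_insert_le _ _) 1) ?_
  refine le_trans (add_le_add_left (add_le_add_left (Set.encard_insert_le _ _) 1) 1) ?_
  rw [Set.encard_singleton]
  norm_num

/-- Bound `#(G_{∂S}) ≤ 4N⌈L⌉` from the proof of Lemma 4.4: the image of a continuous
curve of total variation at most `L` meets at most `4·N·⌈L⌉` of the grid squares of
side `1/N`. -/
theorem card_grid_squares_of_curve
    (L : ℝ) (hL : 0 < L) (N : ℕ) (hN : 0 < N)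
    (γ : ℝ → EuclideanSpace ℝ (Fin 2))
    (hγcont : ContinuousOn γ (Set.Icc 0 1))
    (hγvar : eVariationOn γ (Set.Icc 0 1) ≤ ENNReal.ofReal L) :
    {p : ℤ × ℤ | (γ '' Set.Icc 0 1 ∩ gridSquare N p).Nonempty}.encard
      ≤ ((4 * N * ⌈L⌉.toNat : ℕ) : ℕ∞) := by
  classical
  have hfin : eVariationOn γ (Set.Icc (0:ℝ) 1) ≠ ⊤ :=
    (lt_of_le_of_lt hγvar ENNReal.ofReal_lt_top).ne
  have hfinsub : ∀ {a b : ℝ}, 0 ≤ a → b ≤ 1 → eVariationOn γ (Set.Icc a b) ≠ ⊤ := by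
    intro a b h0 h1
    exact ne_top_of_le_ne_top hfin
      (eVariationOn.mono γ (fun x hx => ⟨le_trans h0 hx.1, le_trans hx.2 h1⟩))
  set v : ℝ → ℝ := fun t => (eVariationOn γ (Set.Icc 0 t)).toReal with hv
  have hadd : ∀ {a b : ℝ}, 0 ≤ a → a ≤ b →
      eVariationOn γ (Set.Icc 0 a) + eVariationOn γ (Set.Icc a b)
        = eVariationOn γ (Set.Icc 0 b) := by
    intro a b h0 hab
    have h := eVariationOn.Icc_add_Icc γ (s := (Set.univ : Set ℝ)) h0 hab (Set.mem_univ a)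
    simpa using h
  have hvdiff : ∀ {a b : ℝ}, 0 ≤ a → a ≤ b → b ≤ 1 →
      (eVariationOn γ (Set.Icc a b)).toReal = v b - v a := by
    intro a b h0 hab h1
    have h := hadd h0 hab
    have f1 : eVariationOn γ (Set.Icc 0 a) ≠ ⊤ := hfinsub le_rfl (le_trans hab h1)
    have f2 : eVariationOn γ (Set.Icc a b) ≠ ⊤ := hfinsub h0 h1
    rw [hv]; simp only
    rw [← h, ENNReal.toReal_add f1 f2]; ring
  have hvmono : ∀ {a b : ℝ}, 0 ≤ a → a ≤ b → b ≤ 1 → v a ≤ v b := by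
    intro a b h0 hab h1
    have h2 := hvdiff h0 hab h1
    have h3 : (0:ℝ) ≤ (eVariationOn γ (Set.Icc a b)).toReal := ENNReal.toReal_nonneg
    linarith
  have hv0 : v 0 = 0 := by
    rw [hv]; simp only
    rw [Set.Icc_self, eVariationOn.subsingleton γ Set.subsingleton_singleton]
    simp
  -- continuity of the variation function
  have hvcont : ContinuousOn v (Set.Icc (0:ℝ) 1) := by
    intro c hc
    rw [Metric.continuousWithinAt_iff]
    intro ε hε
    have hε2 : 0 < ε/2 := by linarith
    have hright : ∃ δ > (0:ℝ), ∀ t ∈ Set.Icc (0:ℝ) 1, c ≤ t → t - c < δ →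
        eVariationOn γ (Set.Icc c t) ≤ ENNReal.ofReal (ε/2) := by
      rcases lt_or_ge c 1 with hc1 | hc1
      · obtain ⟨s, hs, hVs⟩ := evar_small_right γ hc1
          ((hγcont c hc).mono (Set.Icc_subset_Icc hc.1 le_rfl)) (hfinsub hc.1 le_rfl) hε2
        exact ⟨s - c, by linarith [hs.1], fun t ht hct htc =>
          le_trans (eVariationOn.mono γ (Set.Icc_subset_Icc le_rfl (by linarith))) hVs⟩
      · refine ⟨1, one_pos, fun t ht hct htc => ?_⟩
        have heq : t = c := le_antisymm (le_trans ht.2 hc1) hct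
        rw [heq, Set.Icc_self, eVariationOn.subsingleton γ Set.subsingleton_singleton]
        exact zero_le
    have hleft : ∃ δ > (0:ℝ), ∀ t ∈ Set.Icc (0:ℝ) 1, t ≤ c → c - t < δ →
        eVariationOn γ (Set.Icc t c) ≤ ENNReal.ofReal (ε/2) := by
      rcases lt_or_ge 0 c with hc0 | hc0
      · obtain ⟨s, hs, hVs⟩ := evar_small_left γ hc0
          ((hγcont c hc).mono (Set.Icc_subset_Icc le_rfl hc.2)) (hfinsub le_rfl hc.2) hε2
        exact ⟨c - s, by linarith [hs.2], fun t ht htc hct =>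
          le_trans (eVariationOn.mono γ (Set.Icc_subset_Icc (by linarith) le_rfl)) hVs⟩
      · refine ⟨1, one_pos, fun t ht htc hct => ?_⟩
        have heq : t = c := le_antisymm htc (le_trans hc0 ht.1)
        rw [heq, Set.Icc_self, eVariationOn.subsingleton γ Set.subsingleton_singleton]
        exact zero_le
    obtain ⟨δ₂, hδ₂, h2⟩ := hright
    obtain ⟨δ₁, hδ₁, h1⟩ := hleft
    refine ⟨min δ₁ δ₂, lt_min hδ₁ hδ₂, fun {x} hx hdist => ?_⟩
    rw [Real.dist_eq] at hdist
    rcases le_total c x with hcx | hxc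
    · have habs : x - c < δ₂ := by
        rw [abs_of_nonneg (by linarith)] at hdist
        exact lt_of_lt_of_le hdist (min_le_right _ _)
      have hVle := h2 x hx hcx habs
      have hd : (eVariationOn γ (Set.Icc c x)).toReal = v x - v c := hvdiff hc.1 hcx hx.2
      have htr : (eVariationOn γ (Set.Icc c x)).toReal ≤ ε/2 :=
        ENNReal.toReal_le_of_le_ofReal hε2.le hVle
      have hmn : v c ≤ v x := hvmono hc.1 hcx hx.2
      rw [Real.dist_eq, abs_of_nonneg (by linarith)]
      linarith
    · have habs : c - x < δ₁ := by
        rw [abs_of_nonpos (by linarith)] at hdist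
        have := lt_of_lt_of_le hdist (min_le_left _ _)
        linarith
      have hVle := h1 x hx hxc habs
      have hd : (eVariationOn γ (Set.Icc x c)).toReal = v c - v x := hvdiff hx.1 hxc hc.2
      have htr : (eVariationOn γ (Set.Icc x c)).toReal ≤ ε/2 :=
        ENNReal.toReal_le_of_le_ofReal hε2.le hVle
      have hmn : v x ≤ v c := hvmono hx.1 hxc hc.2
      rw [Real.dist_eq, abs_of_nonpos (by linarith)]
      linarith
  -- setup M and partition values
  have hceil : (0:ℤ) < ⌈L⌉ := Int.ceil_pos.mpr hL
  set M : ℕ := N * ⌈L⌉.toNat with hM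
  have hMpos : 0 < M := Nat.mul_pos hN (by omega)
  have hMR : (0:ℝ) < M := Nat.cast_pos.mpr hMpos
  set v1 : ℝ := v 1 with hv1
  have hv1L : v1 ≤ L := ENNReal.toReal_le_of_le_ofReal hL.le hγvar
  have hv1nn : 0 ≤ v1 := ENNReal.toReal_nonneg
  have hLC : L ≤ (⌈L⌉.toNat : ℝ) := by
    calc L ≤ (⌈L⌉ : ℝ) := Int.le_ceil L
      _ = ((⌈L⌉.toNat : ℤ) : ℝ) := by rw [Int.toNat_of_nonneg hceil.le]
      _ = (⌈L⌉.toNat : ℝ) := by push_cast; ring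
  have hIVT : ∀ k : ℕ, ∃ t ∈ Set.Icc (0:ℝ) 1, v t = ((min k M : ℕ) : ℝ) * v1 / M := by
    intro k
    have hmem : ((min k M : ℕ) : ℝ) * v1 / M ∈ Set.Icc (v 0) (v 1) := by
      constructor
      · rw [hv0]; positivity
      · have hkM : ((min k M : ℕ) : ℝ) ≤ (M:ℝ) := Nat.cast_le.mpr (min_le_right k M)
        calc ((min k M : ℕ) : ℝ) * v1 / M ≤ (M:ℝ) * v1 / M := by gcongr
          _ = v1 := by field_simp
    exact intermediate_value_Icc zero_le_one hvcont hmem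
  choose t' ht'mem ht'val using hIVT
  set w : ℕ → ℝ := fun j => if j = 0 then 0 else if M ≤ j then 1 else t' j with hw
  have hwmem : ∀ j, w j ∈ Set.Icc (0:ℝ) 1 := by
    intro j; rw [hw]; simp only
    split
    · exact ⟨le_rfl, zero_le_one⟩
    split
    · exact ⟨zero_le_one, le_rfl⟩
    · exact ht'mem j
  have hwval : ∀ j, v (w j) = ((min j M : ℕ) : ℝ) * v1 / M := by
    intro j; rw [hw]; simp only
    split
    · rename_i h; subst h; rw [hv0]; simp
    split
    · rename_i h h2
      rw [min_eq_right h2]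
      rw [← hv1]
      field_simp
    · rename_i h1 h2
      rw [ht'val j, min_eq_left (by omega)]
  set T : ℕ → ℝ := fun k => (Finset.range (k+1)).sup' Finset.nonempty_range_add_one w with hT
  have hTw : ∀ k, ∃ j ≤ k, T k = w j := by
    intro k
    obtain ⟨j, hj, hje⟩ := Finset.exists_mem_eq_sup' (Finset.nonempty_range_add_one) w
    exact ⟨j, Nat.lt_succ_iff.mp (Finset.mem_range.mp hj), hje⟩
  have hTmono : Monotone T := by
    intro k1 k2 h
    exact Finset.sup'_mono w (Finset.range_subset_range.mpr (by omega)) Finset.nonempty_range_add_one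
  have hTmem : ∀ k, T k ∈ Set.Icc (0:ℝ) 1 := by
    intro k
    obtain ⟨j, _, hje⟩ := hTw k
    rw [hje]; exact hwmem j
  have hTge : ∀ k, w k ≤ T k := by
    intro k
    exact Finset.le_sup' w (Finset.self_mem_range_succ k)
  have hTval : ∀ k, v (T k) = ((min k M : ℕ) : ℝ) * v1 / M := by
    intro k
    obtain ⟨j, hjk, hje⟩ := hTw k
    have hle : v (T k) ≤ ((min k M : ℕ) : ℝ) * v1 / M := by
      rw [hje, hwval j]
      have : ((min j M : ℕ) : ℝ) ≤ ((min k M : ℕ) : ℝ) :=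
        Nat.cast_le.mpr (by omega)
      gcongr
    have hge : ((min k M : ℕ) : ℝ) * v1 / M ≤ v (T k) := by
      rw [← hwval k]
      exact hvmono (hwmem k).1 (hTge k) (hTmem k).2
    linarith
  have hT0 : T 0 = 0 := by
    have h0 := hTw 0
    obtain ⟨j, hj, hje⟩ := h0
    interval_cases j
    rw [hje]; simp [hw]
  have hTM : T M = 1 := by
    refine le_antisymm (hTmem M).2 ?_
    have h1 := hTge M
    have hwM : w M = 1 := by
      rw [hw]; simp only
      rw [if_neg (by omega), if_pos le_rfl]
    rw [hwM] at h1; exact h1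
  -- each piece has small diameter
  have hpiece : ∀ k, ∀ x ∈ Set.Icc (T k) (T (k+1)), ∀ y ∈ Set.Icc (T k) (T (k+1)),
      dist (γ x) (γ y) ≤ 1 / N := by
    intro k
    have hfink : eVariationOn γ (Set.Icc (T k) (T (k+1))) ≠ ⊤ :=
      hfinsub (hTmem k).1 (hTmem (k+1)).2
    have hNR : (0:ℝ) < N := Nat.cast_pos.mpr hN
    have hC : (0:ℝ) < (⌈L⌉.toNat : ℝ) := by
      have : 0 < ⌈L⌉.toNat := by omega
      exact Nat.cast_pos.mpr this
    have hMc : (M:ℝ) = (N:ℝ) * (⌈L⌉.toNat : ℝ) := by rw [hM]; push_cast; ring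
    have hvarle : (eVariationOn γ (Set.Icc (T k) (T (k+1)))).toReal ≤ 1/N := by
      rw [hvdiff (hTmem k).1 (hTmono (by omega : k ≤ k+1)) (hTmem (k+1)).2, hTval, hTval]
      have h1 : ((min (k+1) M : ℕ):ℝ) ≤ ((min k M : ℕ):ℝ) + 1 := by
        have h2 : min (k+1) M ≤ min k M + 1 := by omega
        exact_mod_cast h2
      have hstep : ((min (k+1) M : ℕ):ℝ) * v1 / M - ((min k M : ℕ):ℝ) * v1 / M ≤ v1 / M := by
        have : ((min (k+1) M : ℕ):ℝ) * v1 - ((min k M : ℕ):ℝ) * v1 ≤ v1 := by nlinarith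
        calc ((min (k+1) M : ℕ):ℝ) * v1 / M - ((min k M : ℕ):ℝ) * v1 / M
            = (((min (k+1) M : ℕ):ℝ) * v1 - ((min k M : ℕ):ℝ) * v1) / M := by ring
          _ ≤ v1 / M := by gcongr
      have hfinal : v1 / M ≤ 1 / N := by
        rw [hMc]
        calc v1 / ((N:ℝ) * (⌈L⌉.toNat : ℝ)) ≤ (⌈L⌉.toNat : ℝ) / ((N:ℝ) * (⌈L⌉.toNat : ℝ)) := by
              gcongr
              linarith
          _ = 1 / N := by
              rw [div_eq_div_iff (by positivity) (by positivity)]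
              ring
      linarith
    intro x hx y hy
    have hxmem : x ∈ Set.Icc (T k) (T (k+1)) := hx
    exact le_trans (BoundedVariationOn.dist_le hfink hx hy) hvarle
  -- covering
  have hcov : ∀ m : ℕ, Set.Icc (T 0) (T (m+1)) ⊆ ⋃ k < m+1, Set.Icc (T k) (T (k+1)) := by
    intro m
    induction m with
    | zero =>
      intro x hx
      exact Set.mem_biUnion (by omega : (0:ℕ) < 1) hx
    | succ m ih =>
      rw [Set.biUnion_lt_succ]
      rw [← Set.Icc_union_Icc_eq_Icc (hTmono (by omega : 0 ≤ m+1)) (hTmono (by omega : m+1 ≤ m+2))]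
      exact Set.union_subset (ih.trans Set.subset_union_left) Set.subset_union_right
  -- counting
  set Sk : ℕ → Set (ℤ × ℤ) :=
    fun k => {p | (γ '' Set.Icc (T k) (T (k+1)) ∩ gridSquare N p).Nonempty} with hSk
  have hSkcard : ∀ k, (Sk k).encard ≤ 4 := by
    intro k
    apply encard_grid_le_four N hN
    rintro _ ⟨x, hx, rfl⟩ _ ⟨y, hy, rfl⟩
    exact hpiece k x hx y hy
  obtain ⟨m₀, hm₀⟩ : ∃ m₀, M = m₀ + 1 := ⟨M - 1, by omega⟩
  have hsubU : {p : ℤ × ℤ | (γ '' Set.Icc 0 1 ∩ gridSquare N p).Nonempty}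
      ⊆ ⋃ k < M, Sk k := by
    rintro p ⟨pt, ⟨⟨x, hx, rfl⟩, hq⟩⟩
    have hx' : x ∈ Set.Icc (T 0) (T M) := by rw [hT0, hTM]; exact hx
    rw [hm₀] at hx'
    obtain ⟨k, hk, hxk⟩ := Set.mem_iUnion₂.mp (hcov m₀ hx')
    rw [← hm₀] at hk
    exact Set.mem_iUnion₂.mpr ⟨k, hk, ⟨γ x, ⟨x, hxk, rfl⟩, hq⟩⟩
  have hcount : ∀ n : ℕ, (⋃ k < n, Sk k).encard ≤ ((4*n : ℕ) : ℕ∞) := by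
    intro n
    induction n with
    | zero => simp
    | succ n ih =>
      rw [Set.biUnion_lt_succ]
      refine le_trans (Set.encard_union_le _ _) ?_
      calc (⋃ k < n, Sk k).encard + (Sk n).encard ≤ ((4*n : ℕ) : ℕ∞) + 4 :=
            add_le_add ih (hSkcard n)
        _ = ((4*(n+1) : ℕ) : ℕ∞) := by push_cast; ring
  have hfinalN : 4 * M = 4 * N * ⌈L⌉.toNat := by rw [hM, mul_assoc]
  calc {p : ℤ × ℤ | (γ '' Set.Icc 0 1 ∩ gridSquare N p).Nonempty}.encard
      ≤ (⋃ k < M, Sk k).encard := Set.encard_mono hsubU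
    _ ≤ ((4*M : ℕ) : ℕ∞) := hcount M
    _ = ((4 * N * ⌈L⌉.toNat : ℕ) : ℕ∞) := by rw [hfinalN]
end
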